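/- Let P : ℝⁿ → ℝᵐ be differentiable on the closed ball B = {x : ‖x − x⁰‖ ≤ ρ} with derivative L-Lipschitz on B in the operator norm (‖P'(x) − P'(x')‖ ≤ L‖x − x'‖ for x, x' ∈ B), and suppose there is μ > 0 with ‖P'(x)ᵀh‖ ≥ μ‖h‖ for all x ∈ B and all h ∈ ℝᵐ. Set δ = (L/(2μ²))·‖P(x⁰)‖ and assume δ < 1 and (2μ/L)·∑_{ℓ ≥ 0} δ^{2^ℓ} ≤ ρ. Let the sequences (x^k), (z^k) satisfy for every k: P'(x^k) z^k = P(x^k), ‖z^k‖ ≤ ‖P(x^k)‖/μ, and x^{k+1} = x^k − z^k (pure Newton steps). Then all iterates lie in B, the sequence (x^k) converges to some x* with P(x*) = 0, and for every k: ‖P(x^k)‖ ≤ (2μ²/L)·δ^{2^k} and ‖x^k − x*‖ ≤ (2μ/L)·∑_{ℓ ≥ k} δ^{2^ℓ}. -/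

import Mathlib

open Set Filter

lemma quad_bound {E F : Type*} [NormedAddCommGroup E] [NormedSpace ℝ E]
    [NormedAddCommGroup F] [NormedSpace ℝ F] {s : Set E} (hs : Convex ℝ s)
    {P : E → F} {P' : E → E →L[ℝ] F} {L : ℝ}
    (hd : ∀ x ∈ s, HasFDerivWithinAt P (P' x) s x)
    (hLip : ∀ x ∈ s, ∀ y ∈ s, ‖P' x - P' y‖ ≤ L * ‖x - y‖)
    {a b : E} (ha : a ∈ s) (hb : b ∈ s) :
    ‖P b - P a - P' a (b - a)‖ ≤ L / 2 * ‖b - a‖ ^ 2 := by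
  set g : ℝ → E := fun t => a + t • (b - a) with hg_def
  have hg_mem : ∀ t ∈ Icc (0:ℝ) 1, g t ∈ s := fun t ht => hs.add_smul_sub_mem ha hb ht
  have hg_deriv : ∀ t : ℝ, HasDerivAt g (b - a) t := by
    intro t
    simpa [hg_def] using ((hasDerivAt_id t).smul_const (b - a)).const_add a
  set f : ℝ → F := fun t => P (g t) - P a - t • (P' a (b - a)) with hf_def
  set f' : ℝ → F := fun t => P' (g t) (b - a) - P' a (b - a) with hf'_def
  have hfd : ∀ t ∈ Icc (0:ℝ) 1, HasDerivWithinAt f (f' t) (Icc 0 1) t := by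
    intro t ht
    have h1 : HasDerivWithinAt (fun u => P (g u)) (P' (g t) (b - a)) (Icc 0 1) t := by
      have := (hd (g t) (hg_mem t ht)).comp_hasDerivWithinAt t
        ((hg_deriv t).hasDerivWithinAt) hg_mem
      simpa [Function.comp_def] using this
    have := (h1.sub_const (P a)).sub ((hasDerivWithinAt_id t _).smul_const (P' a (b - a)))
    simp only [one_smul] at this
    exact this
  have hfc : ContinuousOn f (Icc 0 1) := fun t ht => (hfd t ht).continuousWithinAt
  have hfd' : ∀ t ∈ Ico (0:ℝ) 1, HasDerivWithinAt f (f' t) (Ici t) t := by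
    intro t ht
    refine (hfd t ⟨ht.1, ht.2.le⟩).mono_of_mem_nhdsWithin ?_
    rw [mem_nhdsWithin]
    exact ⟨Iio 1, isOpen_Iio, ht.2, fun u hu => ⟨le_trans ht.1 hu.2, hu.1.le⟩⟩
  set B : ℝ → ℝ := fun t => L / 2 * ‖b - a‖ ^ 2 * t ^ 2 with hB_def
  set B' : ℝ → ℝ := fun t => L * ‖b - a‖ ^ 2 * t with hB'_def
  have hB : ∀ t, HasDerivAt B (B' t) t := by
    intro t
    have := (hasDerivAt_pow 2 t).const_mul (L / 2 * ‖b - a‖ ^ 2)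
    refine this.congr_deriv ?_
    simp [hB'_def]
    ring
  have bound : ∀ t ∈ Ico (0:ℝ) 1, ‖f' t‖ ≤ B' t := by
    intro t ht
    have h1 : ‖f' t‖ ≤ ‖P' (g t) - P' a‖ * ‖b - a‖ := by
      have := (P' (g t) - P' a).le_opNorm (b - a)
      simpa only [ContinuousLinearMap.sub_apply] using this
    have h2 : ‖P' (g t) - P' a‖ ≤ L * ‖g t - a‖ := hLip _ (hg_mem t ⟨ht.1, ht.2.le⟩) _ ha
    have h3 : ‖g t - a‖ = t * ‖b - a‖ := by
      simp [hg_def, norm_smul, abs_of_nonneg ht.1]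
    calc ‖f' t‖ ≤ (L * ‖g t - a‖) * ‖b - a‖ :=
          h1.trans (mul_le_mul_of_nonneg_right h2 (norm_nonneg _))
      _ = B' t := by rw [h3]; simp [hB'_def]; ring
  have key := image_norm_le_of_norm_deriv_right_le_deriv_boundary hfc hfd'
    (by simp [hf_def, hg_def, hB_def] : ‖f 0‖ ≤ B 0) hB bound
    (right_mem_Icc.2 zero_le_one)
  have hf1 : f 1 = P b - P a - P' a (b - a) := by simp [hf_def, hg_def]
  have hB1 : B 1 = L / 2 * ‖b - a‖ ^ 2 := by simp [hB_def]
  rwa [hf1, hB1] at key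

/-- pure Newton method: convergence and quadratic rate. -/
theorem stmt9 {n m : ℕ} (ρ L μ : ℝ) (hρ : 0 < ρ) (hL : 0 < L) (hμ : 0 < μ)
    (x0 : EuclideanSpace ℝ (Fin n))
    (P : EuclideanSpace ℝ (Fin n) → EuclideanSpace ℝ (Fin m))
    (P' : EuclideanSpace ℝ (Fin n) →
      (EuclideanSpace ℝ (Fin n) →L[ℝ] EuclideanSpace ℝ (Fin m)))
    (hdiff : ∀ x ∈ Metric.closedBall x0 ρ,
      HasFDerivWithinAt P (P' x) (Metric.closedBall x0 ρ) x)
    (hLip : ∀ x ∈ Metric.closedBall x0 ρ, ∀ x' ∈ Metric.closedBall x0 ρ,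
      ‖P' x - P' x'‖ ≤ L * ‖x - x'‖)
    (hμB : ∀ x ∈ Metric.closedBall x0 ρ, ∀ h : EuclideanSpace ℝ (Fin m),
      μ * ‖h‖ ≤ ‖ContinuousLinearMap.adjoint (P' x) h‖)
    (hδ : L / (2 * μ ^ 2) * ‖P x0‖ < 1)
    (hρbound : 2 * μ / L *
      (∑' ℓ : ℕ, (L / (2 * μ ^ 2) * ‖P x0‖) ^ (2 ^ ℓ)) ≤ ρ)
    (x z : ℕ → EuclideanSpace ℝ (Fin n))
    (hx0 : x 0 = x0)
    (hz : ∀ k, P' (x k) (z k) = P (x k))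
    (hznorm : ∀ k, ‖z k‖ ≤ ‖P (x k)‖ / μ)
    (hstep : ∀ k, x (k + 1) = x k - z k) :
    (∀ k, x k ∈ Metric.closedBall x0 ρ) ∧
    ∃ xs : EuclideanSpace ℝ (Fin n),
      Filter.Tendsto x Filter.atTop (nhds xs) ∧ P xs = 0 ∧
      (∀ k : ℕ, ‖P (x k)‖ ≤ 2 * μ ^ 2 / L * (L / (2 * μ ^ 2) * ‖P x0‖) ^ (2 ^ k)) ∧
      (∀ k : ℕ, ‖x k - xs‖ ≤ 2 * μ / L *
        ∑' ℓ : ℕ, (L / (2 * μ ^ 2) * ‖P x0‖) ^ (2 ^ (ℓ + k))) := by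
  set d : ℝ := L / (2 * μ ^ 2) * ‖P x0‖ with hd_def
  have hd0 : 0 ≤ d := by positivity
  have hd1 : d < 1 := hδ
  set u : ℕ → ℝ := fun ℓ => d ^ (2 ^ ℓ) with hu_def
  have hu0 : ∀ ℓ, 0 ≤ u ℓ := fun ℓ => pow_nonneg hd0 _
  have hule : ∀ ℓ, u ℓ ≤ d ^ ℓ := fun ℓ =>
    pow_le_pow_of_le_one hd0 hd1.le (Nat.lt_two_pow_self).le
  have hsum : Summable u := Summable.of_nonneg_of_le hu0 hule
    (summable_geometric_of_lt_one hd0 hd1)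
  set C : ℝ := 2 * μ ^ 2 / L with hC_def
  set c : ℝ := 2 * μ / L with hc_def
  have hC0 : (0:ℝ) < C := by positivity
  have hc0 : (0:ℝ) < c := by positivity
  have hCd : ∀ k, C * u k / μ = c * u k := by
    intro k; rw [hC_def, hc_def]; field_simp
  have hconv : Convex ℝ (Metric.closedBall x0 ρ) := convex_closedBall x0 ρ
  have htsum_eq : (∑' ℓ : ℕ, d ^ (2 ^ ℓ)) = ∑' ℓ, u ℓ := rfl
  have hρ' : c * ∑' ℓ, u ℓ ≤ ρ := by rw [← htsum_eq]; exact hρbound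
  have psum_le : ∀ k, ∑ ℓ ∈ Finset.range k, u ℓ ≤ ∑' ℓ, u ℓ := fun k =>
    hsum.sum_le_tsum _ (fun ℓ _ => hu0 ℓ)
  have memB : ∀ k, ‖x k - x0‖ ≤ c * ∑ ℓ ∈ Finset.range k, u ℓ →
      x k ∈ Metric.closedBall x0 ρ := by
    intro k h
    rw [Metric.mem_closedBall, dist_eq_norm]
    exact h.trans ((mul_le_mul_of_nonneg_left (psum_le k) hc0.le).trans hρ')
  have H : ∀ k, ‖x k - x0‖ ≤ c * ∑ ℓ ∈ Finset.range k, u ℓ ∧ ‖P (x k)‖ ≤ C * u k := by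
    intro k
    induction k with
    | zero =>
      constructor
      · simp [hx0]
      · have h1 : C * u 0 = ‖P x0‖ := by
          simp only [hu_def, pow_zero, pow_one]
          rw [hC_def, hd_def]; field_simp
        rw [hx0, h1]
    | succ k ih =>
      have hxkB := memB k ih.1
      have hzk : ‖z k‖ ≤ c * u k := by
        refine (hznorm k).trans ?_
        rw [← hCd k]
        gcongr
        exact ih.2
      have part1 : ‖x (k+1) - x0‖ ≤ c * ∑ ℓ ∈ Finset.range (k+1), u ℓ := by
        calc ‖x (k+1) - x0‖ = ‖(x k - x0) - z k‖ := by
              rw [hstep k]; congr 1; abel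
          _ ≤ ‖x k - x0‖ + ‖z k‖ := norm_sub_le _ _
          _ ≤ c * ∑ ℓ ∈ Finset.range k, u ℓ + c * u k := add_le_add ih.1 hzk
          _ = c * ∑ ℓ ∈ Finset.range (k+1), u ℓ := by
              rw [Finset.sum_range_succ]; ring
      have hxk1B := memB (k+1) part1
      refine ⟨part1, ?_⟩
      have hq := quad_bound hconv hdiff hLip hxkB hxk1B
      have hba : x (k+1) - x k = -(z k) := by rw [hstep k]; abel
      have heq : P (x (k+1)) - P (x k) - P' (x k) (x (k+1) - x k) = P (x (k+1)) := by
        rw [hba, map_neg, hz k]; abel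
      rw [heq, hba, norm_neg] at hq
      have h2 : ‖z k‖ ^ 2 ≤ (c * u k) ^ 2 := pow_le_pow_left₀ (norm_nonneg _) hzk 2
      have h3 : L / 2 * (c * u k) ^ 2 = C * u (k+1) := by
        have hukk : u (k+1) = u k ^ 2 := by
          simp only [hu_def]; rw [← pow_mul, pow_succ]
        rw [hukk, hC_def, hc_def]; field_simp
      calc ‖P (x (k+1))‖ ≤ L / 2 * ‖z k‖ ^ 2 := hq
        _ ≤ L / 2 * (c * u k) ^ 2 := by gcongr
        _ = C * u (k+1) := h3
  have memAll : ∀ k, x k ∈ Metric.closedBall x0 ρ := fun k => memB k (H k).1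
  have Pbound : ∀ k, ‖P (x k)‖ ≤ C * u k := fun k => (H k).2
  have hzk' : ∀ k, ‖z k‖ ≤ c * u k := by
    intro k
    refine (hznorm k).trans ?_
    rw [← hCd k]
    gcongr
    exact Pbound k
  have hdist : ∀ k, dist (x k) (x (k+1)) ≤ c * u k := by
    intro k
    rw [dist_eq_norm, hstep k]
    simpa using hzk' k
  have hcu_sum : Summable (fun k => c * u k) := hsum.mul_left c
  have hcauchy : CauchySeq x := cauchySeq_of_dist_le_of_summable _ hdist hcu_sum
  obtain ⟨xs, hxs⟩ := cauchySeq_tendsto_of_complete hcauchy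
  have hxsB : xs ∈ Metric.closedBall x0 ρ :=
    Metric.isClosed_closedBall.mem_of_tendsto hxs (Eventually.of_forall memAll)
  have hPcont : ContinuousWithinAt P (Metric.closedBall x0 ρ) xs :=
    (hdiff xs hxsB).continuousWithinAt
  have hxin : Tendsto x atTop (nhdsWithin xs (Metric.closedBall x0 ρ)) :=
    tendsto_nhdsWithin_of_tendsto_nhds_of_eventually_within x hxs
      (Eventually.of_forall memAll)
  have hP1 : Tendsto (fun k => P (x k)) atTop (nhds (P xs)) := hPcont.tendsto.comp hxin
  have hu_tend : Tendsto u atTop (nhds 0) :=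
    squeeze_zero hu0 hule (tendsto_pow_atTop_nhds_zero_of_lt_one hd0 hd1)
  have hCu_tend : Tendsto (fun k => C * u k) atTop (nhds 0) := by
    simpa using hu_tend.const_mul C
  have hP0 : Tendsto (fun k => P (x k)) atTop (nhds 0) :=
    squeeze_zero_norm Pbound hCu_tend
  have hPxs : P xs = 0 := tendsto_nhds_unique hP1 hP0
  refine ⟨memAll, xs, hxs, hPxs, Pbound, ?_⟩
  intro k
  have h := dist_le_tsum_of_dist_le_of_tendsto _ hdist hcu_sum hxs k
  rw [dist_eq_norm] at h
  calc ‖x k - xs‖ ≤ ∑' mm, c * u (k + mm) := h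
    _ = c * ∑' ℓ, d ^ (2 ^ (ℓ + k)) := by
        rw [tsum_mul_left]
        congr 1
        exact tsum_congr fun ℓ => by simp only [hu_def]; rw [Nat.add_comm]
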